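/- Let A be a finite-dimensional algebra over a field k such that Ext¹_A(A/I, A/I) = 0, where I is a nonzero proper ideal with A/I selfinjective. Then Ext¹_A(U, A/I) = 0 for every finitely generated A/I-module U (regarded as an A-module). -/

import Mathlib

universe u

open CategoryTheory Limits

noncomputable section Aux

variable {A : Type u} [Ring A]

lemma aux_modcat_subsingleton_iff_exactAt {R : Type u} [Ring R]
    (K : CochainComplex (ModuleCat.{u} R) ℕ) :
    Subsingleton (K.homology 1) ↔ K.ExactAt 1 := by
  rw [HomologicalComplex.exactAt_iff_isZero_homology]
  constructor
  · intro h
    rw [IsZero.iff_id_eq_zero]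
    exact ModuleCat.hom_ext (LinearMap.ext fun x => Subsingleton.elim _ _)
  · intro h
    rw [IsZero.iff_id_eq_zero] at h
    refine ⟨fun x y => ?_⟩
    calc x = (𝟙 (K.homology 1) : _ ⟶ _) x := rfl
    _ = (0 : K.homology 1 ⟶ K.homology 1) x := by rw [h]
    _ = ((0 : K.homology 1 ⟶ K.homology 1)) y := by
        rfl
    _ = (𝟙 (K.homology 1) : _ ⟶ _) y := by rw [h]
    _ = y := rfl

variable {k : Type u} [Field k] [Algebra k A]

lemma aux_ext1_subsingleton_iff_lift (X Y : ModuleCat.{u} A) :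
    Subsingleton (((Ext k (ModuleCat.{u} A) 1).obj (Opposite.op X)).obj Y) ↔
      ∀ f : ((ProjectiveResolution.ofComplex X).X 1 ⟶ Y),
        (ProjectiveResolution.ofComplex X).d 2 1 ≫ f = 0 →
        ∃ g : ((ProjectiveResolution.ofComplex X).X 0 ⟶ Y),
          (ProjectiveResolution.ofComplex X).d 1 0 ≫ g = f := by
  have e := (ProjectiveResolution.of X).isoExt (R := k) 1 Y
  rw [ProjectiveResolution.of_def] at e
  dsimp only at e
  rw [e.toLinearEquiv.toEquiv.subsingleton_congr, aux_modcat_subsingleton_iff_exactAt,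
    HomologicalComplex.exactAt_iff' _ 0 1 2 (by simp) (by simp),
    ShortComplex.moduleCat_exact_iff]
  dsimp [HomologicalComplex.sc', ChainComplex.linearYonedaObj]
  exact Iff.rfl

lemma aux_ofComplex_moduleCat_exact (X : ModuleCat.{u} A) :
    ∀ x : (ProjectiveResolution.ofComplex X).X 1,
      (ProjectiveResolution.ofComplex X).d 1 0 x = 0 →
      ∃ z : (ProjectiveResolution.ofComplex X).X 2,
        (ProjectiveResolution.ofComplex X).d 2 1 z = x := by
  have hex := ProjectiveResolution.ofComplex_exactAt_succ X 0
  rw [HomologicalComplex.exactAt_iff' _ 2 1 0 (by simp) (by simp),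
    ShortComplex.moduleCat_exact_iff] at hex
  exact hex

lemma aux_ext1_vanishing_iff (X Y : ModuleCat.{u} A) :
    Subsingleton (((Ext k (ModuleCat.{u} A) 1).obj (Opposite.op X)).obj Y) ↔
      ∀ h : (kernel (Projective.π X) : ModuleCat.{u} A) ⟶ Y,
        ∃ g : Projective.over X ⟶ Y, kernel.ι (Projective.π X) ≫ g = h := by
  rw [aux_ext1_subsingleton_iff_lift]
  set K : ModuleCat.{u} A := kernel (Projective.π X) with hK
  have hd10 : (ProjectiveResolution.ofComplex X).d 1 0 = Projective.d (Projective.π X) :=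
    ProjectiveResolution.ofComplex_d_1_0 X
  have hd21π : (ProjectiveResolution.ofComplex X).d 2 1 ≫ Projective.π K = 0 := by
    have h2 := (ProjectiveResolution.ofComplex X).d_comp_d 2 1 0
    rw [hd10] at h2
    rw [← cancel_mono (kernel.ι (Projective.π X))]
    exact (Category.assoc _ _ _).trans (h2.trans zero_comp.symm)
  constructor
  · intro H h
    obtain ⟨g, hg⟩ := H (Projective.π K ≫ h)
      ((Category.assoc _ _ _).symm.trans ((congrArg (· ≫ h) hd21π).trans zero_comp))
    refine ⟨g, ?_⟩
    rw [← cancel_epi (Projective.π K)]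
    erw [← hg, hd10]
    exact (Category.assoc _ _ _).symm
  · intro H f hf
    have hkf : kernel.ι (Projective.π K) ≫ f = 0 := by
      apply ModuleCat.hom_ext
      apply LinearMap.ext
      intro y
      have h1 : (ProjectiveResolution.ofComplex X).d 1 0 ((kernel.ι (Projective.π K)) y) = 0 := by
        rw [hd10]
        show (kernel.ι (Projective.π K) ≫ (Projective.π K ≫ kernel.ι (Projective.π X))) y = 0
        rw [← Category.assoc, kernel.condition, zero_comp]
        rfl
      obtain ⟨z, hz⟩ := aux_ofComplex_moduleCat_exact X _ h1
      show f ((kernel.ι (Projective.π K)) y) = 0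
      rw [← hz]
      have h2 : ((ProjectiveResolution.ofComplex X).d 2 1 ≫ f) z = 0 := by rw [hf]; rfl
      exact h2
    obtain ⟨g, hg⟩ := H (Abelian.epiDesc (Projective.π K) f hkf)
    refine ⟨g, ?_⟩
    rw [hd10]
    show (Projective.π K ≫ kernel.ι (Projective.π X)) ≫ g = f
    rw [Category.assoc, hg]
    exact Abelian.comp_epiDesc _ _ _

lemma aux_module_transfer {P Q X W : Type u}
    [AddCommGroup P] [Module A P] [AddCommGroup Q] [Module A Q]
    [AddCommGroup X] [Module A X] [AddCommGroup W] [Module A W]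
    [Module.Projective A P] [Module.Projective A Q]
    (p : P →ₗ[A] X) (q : Q →ₗ[A] X)
    (hp : Function.Surjective p) (hq : Function.Surjective q)
    (H : ∀ h : (LinearMap.ker p) →ₗ[A] W, ∃ g : P →ₗ[A] W,
      g ∘ₗ (LinearMap.ker p).subtype = h)
    (h : (LinearMap.ker q) →ₗ[A] W) :
    ∃ g : Q →ₗ[A] W, g ∘ₗ (LinearMap.ker q).subtype = h := by
  obtain ⟨α, hα⟩ := Module.projective_lifting_property p q hp
  obtain ⟨β, hβ⟩ := Module.projective_lifting_property q p hq
  have hβker : ∀ x ∈ LinearMap.ker p, β x ∈ LinearMap.ker q := by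
    intro x hx
    rw [LinearMap.mem_ker]
    have : q (β x) = p x := by rw [← hβ]; rfl
    rw [this, LinearMap.mem_ker.1 hx]
  set ρ : (LinearMap.ker p) →ₗ[A] (LinearMap.ker q) :=
    (β ∘ₗ (LinearMap.ker p).subtype).codRestrict (LinearMap.ker q)
      (fun x => hβker x.1 x.2) with hρ
  obtain ⟨H1, hH1⟩ := H (h ∘ₗ ρ)
  have hτmem : ∀ x : Q, β (α x) - x ∈ LinearMap.ker q := by
    intro x
    rw [LinearMap.mem_ker, map_sub]
    have h1 : q (β (α x)) = p (α x) := by rw [← hβ]; rfl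
    have h2 : p (α x) = q x := by rw [← hα]; rfl
    rw [h1, h2, sub_self]
  set τ : Q →ₗ[A] (LinearMap.ker q) :=
    (β ∘ₗ α - LinearMap.id).codRestrict (LinearMap.ker q) (fun x => hτmem x) with hτ
  refine ⟨H1 ∘ₗ α - h ∘ₗ τ, ?_⟩
  apply LinearMap.ext
  rintro ⟨x, hx⟩
  have hαx : α x ∈ LinearMap.ker p := by
    rw [LinearMap.mem_ker]
    have : p (α x) = q x := by rw [← hα]; rfl
    rw [this, LinearMap.mem_ker.1 hx]
  have e1 : H1 (α x) = h ⟨β (α x), hβker _ hαx⟩ := by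
    have := congrArg (fun φ => φ ⟨α x, hαx⟩) hH1
    simpa [hρ, LinearMap.codRestrict] using this
  have e2 : τ x = ⟨β (α x) - x, hτmem x⟩ := by
    apply Subtype.ext
    simp [hτ, LinearMap.codRestrict]
  simp only [LinearMap.comp_apply, LinearMap.sub_apply, Submodule.coe_subtype]
  rw [e1, e2]
  have : (⟨β (α x), hβker _ hαx⟩ : LinearMap.ker q) =
      ⟨β (α x) - x, hτmem x⟩ + ⟨x, hx⟩ := by
    apply Subtype.ext
    simp
  rw [this, map_add]
  abel

lemma aux_modcat_projective_module (P : ModuleCat.{u} A) [hP : Projective P] :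
    Module.Projective A P :=
  (IsProjective.iff_projective (P := P)).2 hP

lemma aux_canonical_lin_iff (X Y : ModuleCat.{u} A) :
    (∀ h : (kernel (Projective.π X) : ModuleCat.{u} A) ⟶ Y,
        ∃ g : Projective.over X ⟶ Y, kernel.ι (Projective.π X) ≫ g = h) ↔
    (∀ h : (LinearMap.ker (Projective.π X).hom) →ₗ[A] Y,
        ∃ g : (Projective.over X : ModuleCat.{u} A) →ₗ[A] Y,
          g ∘ₗ (LinearMap.ker (Projective.π X).hom).subtype = h) := by
  set e := ModuleCat.kernelIsoKer (Projective.π X)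
  constructor
  · intro H h
    obtain ⟨g, hg⟩ := H (e.hom ≫ ModuleCat.ofHom h)
    refine ⟨g.hom, ?_⟩
    have : e.inv ≫ kernel.ι (Projective.π X) ≫ g = e.inv ≫ e.hom ≫ ModuleCat.ofHom h := by
      rw [hg]
    rw [← Category.assoc, ← Category.assoc, e.inv_hom_id, Category.id_comp,
      ModuleCat.kernelIsoKer_inv_kernel_ι] at this
    exact congrArg ModuleCat.Hom.hom this
  · intro H h
    obtain ⟨g, hg⟩ := H (e.inv ≫ h).hom
    refine ⟨ModuleCat.ofHom g, ?_⟩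
    have h2 : e.hom ≫ ModuleCat.ofHom (LinearMap.ker (Projective.π X).hom).subtype ≫ ModuleCat.ofHom g
        = e.hom ≫ e.inv ≫ h := by
      have hg' : (ModuleCat.ofHom (LinearMap.ker (Projective.π X).hom).subtype ≫ ModuleCat.ofHom g :
          (ModuleCat.of A _) ⟶ Y) = e.inv ≫ h := ModuleCat.hom_ext hg
      rw [← hg']
    rw [← Category.assoc, ← Category.assoc, e.hom_inv_id, Category.id_comp] at h2
    rw [← ModuleCat.kernelIsoKer_hom_ker_subtype]
    exact h2

lemma aux_ext1_vanishing_iff' (X Y : ModuleCat.{u} A) (P : Type u)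
    [AddCommGroup P] [Module A P] [Module.Projective A P]
    (p : P →ₗ[A] X) (hp : Function.Surjective p) :
    Subsingleton (((Ext k (ModuleCat.{u} A) 1).obj (Opposite.op X)).obj Y) ↔
      ∀ h : (LinearMap.ker p) →ₗ[A] Y, ∃ g : P →ₗ[A] Y,
        g ∘ₗ (LinearMap.ker p).subtype = h := by
  rw [aux_ext1_vanishing_iff, aux_canonical_lin_iff]
  have hπs : Function.Surjective (Projective.π X).hom :=
    (ModuleCat.epi_iff_surjective (Projective.π X)).1 inferInstance
  have hmp : Module.Projective A (Projective.over X : ModuleCat.{u} A) :=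
    aux_modcat_projective_module _
  constructor
  · intro H
    exact aux_module_transfer (Projective.π X).hom p hπs hp H
  · intro H
    exact aux_module_transfer p (Projective.π X).hom hp hπs H

lemma aux_step2 {B : Type u} [Ring B] (π : A →+* B) (hπ : Function.Surjective π)
    (I : Ideal A) (hker : RingHom.ker π = I) (hB : Module.Injective B B)
    (n : ℕ) (K : Submodule A (Fin n → A)) (h' : K →ₗ[A] (A ⧸ (I : Submodule A A)))
    (hvan : ∀ (v) (hv : v ∈ K), (∀ i, v i ∈ I) → h' ⟨v, hv⟩ = 0) :
    ∃ G : (Fin n → A) →ₗ[A] (A ⧸ (I : Submodule A A)), G ∘ₗ K.subtype = h' := by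
  letI : Module A B := Module.compHom B π
  have hsmul : ∀ (a : A) (b : B), a • b = π a * b := fun a b => rfl
  -- π as an A-linear map
  let πlin : A →ₗ[A] B :=
    { toFun := π
      map_add' := fun x y => map_add π x y
      map_smul' := fun a x => by simp [hsmul, map_mul, smul_eq_mul] }
  have hIker : (I : Submodule A A) ≤ LinearMap.ker πlin := by
    intro x hx
    rw [LinearMap.mem_ker]
    show π x = 0
    rw [← hker] at hx
    exact hx
  let ε0 : (A ⧸ (I : Submodule A A)) →ₗ[A] B := Submodule.liftQ _ πlin hIker
  have hε0 : ∀ a : A, ε0 (Submodule.Quotient.mk a) = π a := fun a => rfl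
  have hε0surj : Function.Surjective ε0 := by
    intro b
    obtain ⟨a, rfl⟩ := hπ b
    exact ⟨Submodule.Quotient.mk a, rfl⟩
  have hε0inj : Function.Injective ε0 := by
    rw [← LinearMap.ker_eq_bot, Submodule.ker_liftQ_eq_bot]
    intro x hx
    rw [LinearMap.mem_ker] at hx
    rw [← hker]
    exact hx
  let ε : (A ⧸ (I : Submodule A A)) ≃ₗ[A] B := LinearEquiv.ofBijective ε0 ⟨hε0inj, hε0surj⟩
  -- the map to Fin n → B
  let qmap : (Fin n → A) →ₗ[A] (Fin n → B) :=
    { toFun := fun v i => π (v i)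
      map_add' := fun v w => by funext i; simp
      map_smul' := fun a v => by
        funext i
        show π (a • v i) = a • π (v i)
        rw [smul_eq_mul, map_mul, hsmul] }
  -- the image of K
  let K' : Submodule B (Fin n → B) :=
    { carrier := qmap '' (K : Set (Fin n → A))
      add_mem' := by
        rintro _ _ ⟨v, hv, rfl⟩ ⟨w, hw, rfl⟩
        exact ⟨v + w, K.add_mem hv hw, by simp⟩
      zero_mem' := ⟨0, K.zero_mem, by simp⟩
      smul_mem' := by
        rintro b _ ⟨v, hv, rfl⟩
        obtain ⟨a, rfl⟩ := hπ b
        refine ⟨a • v, K.smul_mem a hv, ?_⟩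
        rw [map_smul]
        rfl }
  let ψ : K →ₗ[A] B := ε0 ∘ₗ h'
  have hwd : ∀ (v : Fin n → A) (hv : v ∈ K) (w : Fin n → A) (hw : w ∈ K),
      qmap v = qmap w → ψ ⟨v, hv⟩ = ψ ⟨w, hw⟩ := by
    intro v hv w hw hq
    have hmem : ∀ i, (v - w) i ∈ I := by
      intro i
      have : π (v i) = π (w i) := congrFun hq i
      rw [← hker]
      show π ((v - w) i) = 0
      simp only [Pi.sub_apply, map_sub]
      rw [this, sub_self]
    have hsub : h' ⟨v - w, K.sub_mem hv hw⟩ = 0 := hvan _ _ hmem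
    have : (⟨v, hv⟩ : K) = ⟨v - w, K.sub_mem hv hw⟩ + ⟨w, hw⟩ := by
      apply Subtype.ext; simp
    show ε0 (h' _) = ε0 (h' _)
    rw [this, map_add, hsub, zero_add]
  -- the descended map on K'
  let hbarFun : K' → B := fun w => ψ ⟨Classical.choose w.2, (Classical.choose_spec w.2).1⟩
  have hbar_spec : ∀ (w : K') (v : Fin n → A) (hv : v ∈ K), qmap v = (w : Fin n → B) →
      hbarFun w = ψ ⟨v, hv⟩ := by
    intro w v hv hqv
    exact hwd _ (Classical.choose_spec w.2).1 v hv
      (by rw [(Classical.choose_spec w.2).2, ← hqv])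
  let hbar : K' →ₗ[B] B :=
    { toFun := hbarFun
      map_add' := by
        rintro ⟨w1, hw1⟩ ⟨w2, hw2⟩
        obtain ⟨v1, hv1, rfl⟩ := hw1
        obtain ⟨v2, hv2, rfl⟩ := hw2
        have e1 : hbarFun ⟨qmap v1, ⟨v1, hv1, rfl⟩⟩ = ψ ⟨v1, hv1⟩ := hbar_spec _ v1 hv1 rfl
        have e2 : hbarFun ⟨qmap v2, ⟨v2, hv2, rfl⟩⟩ = ψ ⟨v2, hv2⟩ := hbar_spec _ v2 hv2 rfl
        have e3 : hbarFun (⟨qmap v1, ⟨v1, hv1, rfl⟩⟩ + ⟨qmap v2, ⟨v2, hv2, rfl⟩⟩)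
            = ψ ⟨v1 + v2, K.add_mem hv1 hv2⟩ :=
          hbar_spec _ (v1 + v2) (K.add_mem hv1 hv2) (by rw [map_add]; rfl)
        rw [e1, e2, e3]
        have : (⟨v1 + v2, K.add_mem hv1 hv2⟩ : K) = ⟨v1, hv1⟩ + ⟨v2, hv2⟩ := rfl
        rw [this, map_add]
      map_smul' := by
        rintro b ⟨w, hw⟩
        obtain ⟨v, hv, rfl⟩ := hw
        obtain ⟨a, rfl⟩ := hπ b
        have e1 : hbarFun ⟨qmap v, ⟨v, hv, rfl⟩⟩ = ψ ⟨v, hv⟩ := hbar_spec _ v hv rfl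
        have e3 : hbarFun (π a • ⟨qmap v, ⟨v, hv, rfl⟩⟩)
            = ψ ⟨a • v, K.smul_mem a hv⟩ :=
          hbar_spec _ (a • v) (K.smul_mem a hv) (by rw [map_smul]; rfl)
        rw [e1, e3]
        have : (⟨a • v, K.smul_mem a hv⟩ : K) = a • ⟨v, hv⟩ := rfl
        rw [this, map_smul, hsmul, RingHom.id_apply, smul_eq_mul]
    }
  obtain ⟨Gb, hGb⟩ := hB.out K'.subtype K'.injective_subtype hbar
  -- assemble the final map
  let G : (Fin n → A) →ₗ[A] (A ⧸ (I : Submodule A A)) :=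
    { toFun := fun v => ε.symm (Gb (qmap v))
      map_add' := fun v w => by
        rw [map_add, map_add, map_add]
      map_smul' := fun a v => by
        rw [RingHom.id_apply, map_smul]
        have h1 : Gb (a • qmap v) = a • Gb (qmap v) := Gb.map_smul (π a) (qmap v)
        rw [h1, map_smul] }
  refine ⟨G, ?_⟩
  apply LinearMap.ext
  rintro ⟨v, hv⟩
  show ε.symm (Gb (qmap v)) = h' ⟨v, hv⟩
  have hmem : qmap v ∈ K' := ⟨v, hv, rfl⟩
  have h1 : Gb (qmap v) = hbar ⟨qmap v, hmem⟩ := hGb ⟨qmap v, hmem⟩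
  rw [h1]
  have h2 : hbar ⟨qmap v, hmem⟩ = ψ ⟨v, hv⟩ := hbar_spec _ v hv rfl
  rw [h2]
  show ε.symm (ε0 (h' ⟨v, hv⟩)) = h' ⟨v, hv⟩
  have : ε0 (h' ⟨v, hv⟩) = ε (h' ⟨v, hv⟩) := rfl
  rw [this, LinearEquiv.symm_apply_apply]

end Aux

theorem stmt16 (k : Type u) [Field k] (A : Type u) [Ring A] [Algebra k A]
    [FiniteDimensional k A]
    (I : Ideal A) (hItwoSided : ∀ a ∈ I, ∀ b : A, a * b ∈ I)
    (hInezero : I ≠ ⊥) (hIproper : I ≠ ⊤)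
    (B : Type u) [Ring B] (π : A →+* B) (hπ : Function.Surjective π)
    (hker : RingHom.ker π = I) (hB : Module.Injective B B)
    (hext : Subsingleton
      (↥(((Ext k (ModuleCat.{u} A) 1).obj
          (Opposite.op (ModuleCat.of A (A ⧸ I)))).obj (ModuleCat.of A (A ⧸ I))))) :
    ∀ (U : ModuleCat.{u} A), Module.Finite A U → (∀ a ∈ I, ∀ u : U, a • u = 0) →
      Subsingleton
        (↥(((Ext k (ModuleCat.{u} A) 1).obj
            (Opposite.op U)).obj (ModuleCat.of A (A ⧸ I)))) := by
  classical
  intro U hfin hann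
  haveI := hfin
  obtain ⟨n, p, hp⟩ := Module.Finite.exists_fin' A U
  -- the extension property for I ⊆ A
  have E1' := (aux_ext1_vanishing_iff' (k := k) (ModuleCat.of A (A ⧸ I))
    (ModuleCat.of A (A ⧸ I)) A ((I : Submodule A A).mkQ)
    (Submodule.mkQ_surjective _)).1 hext
  rw [Submodule.ker_mkQ] at E1'
  refine (aux_ext1_vanishing_iff' (k := k) U (ModuleCat.of A (A ⧸ I))
    (Fin n → A) p hp).2 ?_
  intro hraw
  let h : (LinearMap.ker p) →ₗ[A] (A ⧸ (I : Submodule A A)) := hraw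
  have hhraw : ∀ x, h x = hraw x := fun _ => rfl
  -- vectors with entries in I are in the kernel of p
  have hKI : ∀ v : Fin n → A, (∀ i, v i ∈ I) → v ∈ LinearMap.ker p := by
    intro v hv
    rw [LinearMap.mem_ker]
    rw [← Finset.univ_sum_single v, map_sum]
    refine Finset.sum_eq_zero fun i _ => ?_
    have hsingle : (Pi.single i (v i) : Fin n → A) = v i • (Pi.single i (1 : A) : Fin n → A) := by
      funext j
      rcases eq_or_ne j i with rfl | hne
      · simp
      · simp [Pi.single_eq_of_ne hne]
    rw [hsingle, map_smul]
    exact hann (v i) (hv i) _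
  -- step 1 : the restriction to each copy of I extends
  let σ : Fin n → ((I : Submodule A A) →ₗ[A] (LinearMap.ker p)) := fun i =>
    ((LinearMap.single A (fun _ : Fin n => A) i) ∘ₗ (I : Submodule A A).subtype).codRestrict _
      (fun c => hKI _ (fun j => by
        rcases eq_or_ne j i with rfl | hne
        · simpa using c.2
        · simp [Pi.single_eq_of_ne hne]))
  have hσ : ∀ (i : Fin n) (c : (I : Submodule A A)),
      ((σ i c : LinearMap.ker p) : Fin n → A) = Pi.single i (c : A) := by
    intro i c
    rfl
  have hgex : ∀ i : Fin n, ∃ g : A →ₗ[A] (A ⧸ (I : Submodule A A)),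
      g ∘ₗ (I : Submodule A A).subtype = (h ∘ₗ σ i) := fun i => E1' _
  choose g hgspec using hgex
  let g0 : (Fin n → A) →ₗ[A] (A ⧸ (I : Submodule A A)) :=
    ∑ i, (g i) ∘ₗ (LinearMap.proj i)
  have C1 : ∀ (v) (hv : v ∈ LinearMap.ker p), (∀ i, v i ∈ I) →
      h ⟨v, hv⟩ = g0 v := by
    intro v hv hvI
    have hdecomp : (⟨v, hv⟩ : LinearMap.ker p) = ∑ i, σ i ⟨v i, hvI i⟩ := by
      apply Subtype.ext
      rw [AddSubmonoidClass.coe_finset_sum]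
      have : ∀ i ∈ Finset.univ, ((σ i ⟨v i, hvI i⟩ : LinearMap.ker p) : Fin n → A)
          = Pi.single i (v i) := fun i _ => hσ i _
      rw [Finset.sum_congr rfl this, Finset.univ_sum_single]
    rw [hdecomp, map_sum]
    have hg0 : g0 v = ∑ i, g i (v i) := by
      simp [g0, LinearMap.sum_apply]
    rw [hg0]
    refine Finset.sum_congr rfl fun i _ => ?_
    have := congrArg (fun φ => φ (⟨v i, hvI i⟩ : (I : Submodule A A))) (hgspec i)
    simpa using this.symm
  let h2 : (LinearMap.ker p) →ₗ[A] (A ⧸ (I : Submodule A A)) :=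
    h - g0 ∘ₗ (LinearMap.ker p).subtype
  have hvan : ∀ (v) (hv : v ∈ LinearMap.ker p), (∀ i, v i ∈ I) → h2 ⟨v, hv⟩ = 0 := by
    intro v hv hvI
    have : h2 ⟨v, hv⟩ = h ⟨v, hv⟩ - g0 v := rfl
    rw [this, C1 v hv hvI, sub_self]
  obtain ⟨G, hG⟩ := aux_step2 π hπ I hker hB n (LinearMap.ker p) h2 hvan
  refine ⟨g0 + G, ?_⟩
  apply LinearMap.ext
  intro x
  show (g0 + G) ((LinearMap.ker p).subtype x) = hraw x
  rw [← hhraw]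
  have hGx : G ((LinearMap.ker p).subtype x) = h2 x := by
    rw [← hG]; rfl
  have : (g0 + G) ((LinearMap.ker p).subtype x)
      = g0 ((LinearMap.ker p).subtype x) + h2 x := by
    rw [← hGx]; rfl
  rw [this]
  have : h2 x = h x - g0 ((LinearMap.ker p).subtype x) := rfl
  rw [this]
  abel
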